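/- The function h(x) = ∑_{k=0}^{m-1} 2*(A_{m-1-k}/A_m)*x^k, where A_j = ∏_{i=1}^{j} (2i-1)/(2i) (A_0 = 1), satisfies the first-order ODE x(1-x)h'(x) - [(m - 1/2) - (m-1)x]·h(x) = -2m for all real x, and h(1) = 4m. -/

import Mathlib

open Finset

theorem stmt_11 (m : ℕ) (hm : 1 ≤ m)
    (A : ℕ → ℝ) (hA : ∀ j, A j = ∏ i ∈ Finset.Icc 1 j, ((2 * (i : ℝ) - 1) / (2 * (i : ℝ))))
    (h : ℝ → ℝ)
    (hh : ∀ x : ℝ, h x = ∑ k ∈ Finset.range m, 2 * (A (m - 1 - k) / A m) * x ^ k) :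
    (∀ x : ℝ,
      x * (1 - x) * deriv h x - (((m : ℝ) - 1 / 2) - ((m : ℝ) - 1) * x) * h x = -(2 * m)) ∧
    h 1 = 4 * m := by
  have hfun : h = fun x => ∑ k ∈ Finset.range m, 2 * (A (m - 1 - k) / A m) * x ^ k :=
    funext hh
  subst hfun
  have hApos : ∀ n, 0 < A n := by
    intro n
    rw [hA]
    apply Finset.prod_pos
    intro i hi
    have h1 : 1 ≤ i := (Finset.mem_Icc.mp hi).1
    have h1' : (1:ℝ) ≤ (i:ℝ) := by exact_mod_cast h1
    apply div_pos <;> linarith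
  have hAne : ∀ n, A n ≠ 0 := fun n => (hApos n).ne'
  have hrec : ∀ n : ℕ, A (n+1) = A n * ((2*(n:ℝ)+1)/(2*(n:ℝ)+2)) := by
    intro n
    rw [hA, hA, Finset.prod_Icc_succ_top (Nat.le_add_left 1 n)]
    push_cast
    congr 1
    rw [div_eq_div_iff (by positivity) (by positivity)]
    ring
  have key0 : 2 * (A (m-1) / A m) * ((m:ℝ) - 1/2) = 2 * m := by
    obtain ⟨p, rfl⟩ : ∃ p, m = p + 1 := ⟨m - 1, by omega⟩
    have h1 : p + 1 - 1 = p := by omega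
    rw [h1, hrec p]
    have h2 : (2*(p:ℝ)+1) ≠ 0 := by positivity
    have h3 : (2*(p:ℝ)+2) ≠ 0 := by positivity
    field_simp [hAne p]
    push_cast
    ring
  have sumA : ∀ n, ∑ j ∈ Finset.range n, A j = 2 * n * A n := by
    intro n
    induction n with
    | zero => simp
    | succ p ih =>
      rw [Finset.sum_range_succ, ih, hrec p]
      have h2 : (2*(p:ℝ)+2) ≠ 0 := by positivity
      field_simp
      push_cast
      ring
  constructor
  · intro x
    have hd : deriv (fun x : ℝ => ∑ k ∈ Finset.range m, 2 * (A (m - 1 - k) / A m) * x ^ k) x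
        = ∑ k ∈ Finset.range m, 2 * (A (m - 1 - k) / A m) * ((k:ℝ) * x ^ (k-1)) := by
      have H : HasDerivAt (fun x : ℝ => ∑ k ∈ Finset.range m, 2 * (A (m - 1 - k) / A m) * x ^ k)
          (∑ k ∈ Finset.range m, 2 * (A (m - 1 - k) / A m) * ((k:ℝ) * x ^ (k-1))) x := by
        apply HasDerivAt.fun_sum
        intro k _
        exact (hasDerivAt_pow k x).const_mul _
      exact H.deriv
    rw [hd]
    set b : ℕ → ℝ := fun j => if j = m then 0 else 2 * (A (m-1-j) / A m) * ((m:ℝ) - (j:ℝ) - 1/2)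
      with hb
    have hterm : ∀ k ∈ Finset.range m,
        x * (1-x) * (2 * (A (m-1-k) / A m) * ((k:ℝ) * x ^ (k-1)))
          - (((m:ℝ) - 1/2) - ((m:ℝ) - 1) * x) * (2 * (A (m-1-k) / A m) * x ^ k)
        = b (k+1) * x ^ (k+1) - b k * x ^ k := by
      intro k hk
      have hkm : k < m := Finset.mem_range.mp hk
      have hpow : x * (1-x) * ((k:ℝ) * x ^ (k-1)) = (k:ℝ) * x ^ k - (k:ℝ) * x ^ (k+1) := by
        rcases k with _ | j
        · simp
        · simp only [Nat.add_sub_cancel]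
          push_cast
          ring
      have hbk : b k = 2 * (A (m-1-k) / A m) * ((m:ℝ) - (k:ℝ) - 1/2) := by
        simp only [hb, if_neg (by omega : k ≠ m)]
      rcases eq_or_lt_of_le (Nat.succ_le_of_lt hkm) with hk1 | hk1
      · -- k + 1 = m
        have hbk1 : b (k+1) = 0 := by simp only [hb, if_pos hk1]
        have hmc : (m:ℝ) = (k:ℝ) + 1 := by exact_mod_cast congrArg (Nat.cast : ℕ → ℝ) hk1.symm
        rw [hbk1, hbk, hmc]
        linear_combination (2 * (A (m-1-k) / A m)) * hpow
      · -- k + 1 < m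
        obtain ⟨n, rfl⟩ : ∃ n, m = k + 2 + n := ⟨m - (k+2), by omega⟩
        have e1 : k + 2 + n - 1 - k = n + 1 := by omega
        have e2 : k + 2 + n - 1 - (k+1) = n := by omega
        have hbk1 : b (k+1) = 2 * (A n / A (k+2+n)) * ((↑(k+2+n):ℝ) - (↑(k+1):ℝ) - 1/2) := by
          simp only [hb, if_neg (by omega : k + 1 ≠ k + 2 + n), e2]
        have key : A (n+1) * (2*(n:ℝ)+2) = A n * (2*(n:ℝ)+1) := by
          rw [hrec n, mul_assoc, div_mul_cancel₀ _ (by positivity : (2*(n:ℝ)+2) ≠ 0)]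
        have hcoef : 2 * (A (n+1) / A (k+2+n)) * ((n:ℝ)+1)
            = 2 * (A n / A (k+2+n)) * ((n:ℝ)+1/2) := by
          linear_combination (1 / A (k+2+n)) * key
        rw [hbk, hbk1, e1]
        push_cast
        push_cast at hpow hcoef
        linear_combination (2 * (A (n+1) / A (k+2+n))) * hpow + x^(k+1) * hcoef
    calc x * (1-x) * (∑ k ∈ Finset.range m, 2 * (A (m-1-k) / A m) * ((k:ℝ) * x ^ (k-1)))
          - (((m:ℝ) - 1/2) - ((m:ℝ) - 1) * x)
            * (∑ k ∈ Finset.range m, 2 * (A (m-1-k) / A m) * x ^ k)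
        = ∑ k ∈ Finset.range m,
            (x * (1-x) * (2 * (A (m-1-k) / A m) * ((k:ℝ) * x ^ (k-1)))
              - (((m:ℝ) - 1/2) - ((m:ℝ) - 1) * x) * (2 * (A (m-1-k) / A m) * x ^ k)) := by
          rw [Finset.mul_sum, Finset.mul_sum, ← Finset.sum_sub_distrib]
      _ = ∑ k ∈ Finset.range m, (b (k+1) * x ^ (k+1) - b k * x ^ k) :=
          Finset.sum_congr rfl hterm
      _ = b m * x ^ m - b 0 * x ^ 0 := Finset.sum_range_sub (fun k => b k * x ^ k) m
      _ = -(2 * m) := by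
          have hbm : b m = 0 := by simp only [hb, if_pos rfl]
          have hb0 : b 0 = 2 * (A (m-1) / A m) * ((m:ℝ) - 0 - 1/2) := by
            simp only [hb, if_neg (by omega : 0 ≠ m)]
            norm_num
          rw [hbm, hb0]
          simp only [pow_zero]
          nlinarith [key0]
  · show (∑ k ∈ Finset.range m, 2 * (A (m-1-k) / A m) * (1:ℝ) ^ k) = 4 * m
    have e : ∀ k ∈ Finset.range m, 2 * (A (m-1-k) / A m) * (1:ℝ) ^ k = 2 / A m * A (m-1-k) := by
      intro k _; rw [one_pow]; ring
    rw [Finset.sum_congr rfl e, ← Finset.mul_sum, Finset.sum_range_reflect, sumA m]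
    field_simp [hAne m]
    ring
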